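/- Let G be a simple graph on n vertices and 0 ≤ α ≤ 1. Then α·Δ(G) ≤ λ_α(G) ≤ α·Δ(G) + (1-α)·λ(G), where Δ(G) is the maximum degree, λ(G) is the largest eigenvalue of the adjacency matrix A(G), and λ_α(G) is the largest eigenvalue of A_α(G) = α·D(G) + (1-α)·A(G) with D(G) the diagonal degree matrix. -/

import Mathlib

open Finset Matrix

noncomputable def Aalpha {V : Type*} [Fintype V] [DecidableEq V]
    (G : SimpleGraph V) [DecidableRel G.Adj] (α : ℝ) : Matrix V V ℝ :=
  α • Matrix.diagonal (fun v => (G.degree v : ℝ)) + (1 - α) • G.adjMatrix ℝ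

noncomputable def lamAlpha {V : Type*} [Fintype V] [DecidableEq V]
    (G : SimpleGraph V) [DecidableRel G.Adj] (α : ℝ) : ℝ :=
  sSup (spectrum ℝ (Aalpha G α))

section aux

variable {m : ℕ} {A : Matrix (Fin m) (Fin m) ℝ}

lemma spectrum_finite (hA : A.IsHermitian) : (spectrum ℝ A).Finite := by
  rw [hA.spectrum_real_eq_range_eigenvalues]
  exact Set.finite_range _

lemma eig_le_sSup (hA : A.IsHermitian) (i : Fin m) :
    hA.eigenvalues i ≤ sSup (spectrum ℝ A) :=
  le_csSup (spectrum_finite hA).bddAbove (hA.eigenvalues_mem_spectrum_real i)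

/-- Rayleigh-type bound: the quadratic form is at most the top of the spectrum times `‖x‖²`. -/
lemma rayleigh_le (hA : A.IsHermitian) (x : Fin m → ℝ) :
    x ⬝ᵥ (A *ᵥ x) ≤ sSup (spectrum ℝ A) * (x ⬝ᵥ x) := by
  set U : Matrix (Fin m) (Fin m) ℝ := (hA.eigenvectorUnitary : Matrix (Fin m) (Fin m) ℝ) with hU
  have hUU : U * star U = 1 := (Matrix.mem_unitaryGroup_iff).mp (hA.eigenvectorUnitary).2
  set c : Fin m → ℝ := (star U) *ᵥ x with hc
  have key : ∀ y : Fin m → ℝ, x ⬝ᵥ (U *ᵥ y) = c ⬝ᵥ y := by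
    intro y
    rw [Matrix.dotProduct_mulVec, hc]
    congr 1
    rw [Matrix.star_eq_conjTranspose, Matrix.conjTranspose_eq_transpose_of_trivial,
      Matrix.mulVec_transpose]
  have hUc : U *ᵥ c = x := by
    rw [hc, Matrix.mulVec_mulVec, hUU, Matrix.one_mulVec]
  have hcc : c ⬝ᵥ c = x ⬝ᵥ x := by
    rw [← key c, hUc]
  have hAx : A *ᵥ x = U *ᵥ ((Matrix.diagonal hA.eigenvalues) *ᵥ c) := by
    have hst := hA.spectral_theorem
    have hd : (Matrix.diagonal (RCLike.ofReal ∘ hA.eigenvalues) : Matrix (Fin m) (Fin m) ℝ)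
        = Matrix.diagonal hA.eigenvalues := by
      congr 1
    rw [hc]
    conv_lhs => rw [hst, Unitary.conjStarAlgAut_apply]
    rw [← Matrix.mulVec_mulVec, ← Matrix.mulVec_mulVec, hd]
  calc x ⬝ᵥ (A *ᵥ x) = c ⬝ᵥ ((Matrix.diagonal hA.eigenvalues) *ᵥ c) := by rw [hAx, key]
    _ = ∑ i, hA.eigenvalues i * (c i * c i) := by
        simp only [dotProduct, Matrix.mulVec_diagonal]
        exact Finset.sum_congr rfl fun i _ => by ring
    _ ≤ ∑ i, sSup (spectrum ℝ A) * (c i * c i) := by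
        refine Finset.sum_le_sum fun i _ => ?_
        exact mul_le_mul_of_nonneg_right (eig_le_sSup hA i) (mul_self_nonneg _)
    _ = sSup (spectrum ℝ A) * (c ⬝ᵥ c) := by rw [dotProduct, Finset.mul_sum]
    _ = sSup (spectrum ℝ A) * (x ⬝ᵥ x) := by rw [hcc]

lemma exists_top_eigenvector (hA : A.IsHermitian) (hm : 1 ≤ m) :
    ∃ x : Fin m → ℝ, x ⬝ᵥ x = 1 ∧ A *ᵥ x = sSup (spectrum ℝ A) • x := by
  have hne : Nonempty (Fin m) := ⟨⟨0, hm⟩⟩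
  have hmem : sSup (spectrum ℝ A) ∈ spectrum ℝ A := by
    refine Set.Nonempty.csSup_mem ?_ (spectrum_finite hA)
    rw [hA.spectrum_real_eq_range_eigenvalues]
    exact Set.range_nonempty _
  rw [hA.spectrum_real_eq_range_eigenvalues] at hmem
  obtain ⟨j, hj⟩ := hmem
  refine ⟨⇑(hA.eigenvectorBasis j), ?_, ?_⟩
  · have h1 : ‖hA.eigenvectorBasis j‖ = 1 := hA.eigenvectorBasis.orthonormal.1 j
    have := real_inner_self_eq_norm_sq (hA.eigenvectorBasis j)
    rw [h1] at this
    rw [PiLp.inner_apply] at this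
    simpa [dotProduct, ← pow_two] using this
  · have hj' : hA.eigenvalues j = sSup (spectrum ℝ A) := by
      rw [hA.spectrum_real_eq_range_eigenvalues]; exact hj
    rw [← hj']
    exact hA.mulVec_eigenvectorBasis j

end aux

theorem alpha_maxDegree_le_lamAlpha_le {n : ℕ} (hn : 1 ≤ n)
    (G : SimpleGraph (Fin n)) [DecidableRel G.Adj]
    (α : ℝ) (h0 : 0 ≤ α) (h1 : α ≤ 1) :
    α * (G.maxDegree : ℝ) ≤ lamAlpha G α ∧
      lamAlpha G α ≤ α * (G.maxDegree : ℝ) + (1 - α) * lamAlpha G 0 := by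
  have hne : Nonempty (Fin n) := ⟨⟨0, hn⟩⟩
  have hadj : (G.adjMatrix ℝ).IsHermitian := by
    rw [Matrix.IsHermitian, Matrix.conjTranspose_eq_transpose_of_trivial,
      SimpleGraph.transpose_adjMatrix]
  have hherm : ∀ β : ℝ, (Aalpha G β).IsHermitian := by
    intro β
    rw [Matrix.IsHermitian, Aalpha, Matrix.conjTranspose_eq_transpose_of_trivial,
      Matrix.transpose_add, Matrix.transpose_smul, Matrix.transpose_smul,
      Matrix.diagonal_transpose, SimpleGraph.transpose_adjMatrix]
  have hA0 : Aalpha G 0 = G.adjMatrix ℝ := by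
    simp [Aalpha]
  constructor
  · -- lower bound
    obtain ⟨v, hv⟩ := G.exists_maximal_degree_vertex
    have h := rayleigh_le (hherm α) (Pi.single v 1)
    have hx : (Pi.single v 1 : Fin n → ℝ) ⬝ᵥ (Pi.single v 1) = 1 := by
      simp [dotProduct_single]
    have hq : (Pi.single v 1 : Fin n → ℝ) ⬝ᵥ ((Aalpha G α) *ᵥ Pi.single v 1)
        = α * (G.degree v : ℝ) := by
      rw [Matrix.mulVec_single]
      simp [single_dotProduct, Aalpha, Matrix.diagonal_apply_eq]
    rw [hq, hx, mul_one] at h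
    rw [hv]
    exact h
  · -- upper bound
    obtain ⟨x, hx1, hxe⟩ := exists_top_eigenvector (hherm α) hn
    have heq : lamAlpha G α = x ⬝ᵥ ((Aalpha G α) *ᵥ x) := by
      rw [hxe, dotProduct_smul, smul_eq_mul, hx1, mul_one]
      rfl
    have hsplit : x ⬝ᵥ ((Aalpha G α) *ᵥ x)
        = α * (x ⬝ᵥ ((Matrix.diagonal (fun v => (G.degree v : ℝ))) *ᵥ x))
          + (1 - α) * (x ⬝ᵥ ((G.adjMatrix ℝ) *ᵥ x)) := by
      rw [Aalpha, Matrix.add_mulVec, Matrix.smul_mulVec, Matrix.smul_mulVec,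
        dotProduct_add, dotProduct_smul, dotProduct_smul]
      simp [smul_eq_mul]
    have hD : x ⬝ᵥ ((Matrix.diagonal (fun v => (G.degree v : ℝ))) *ᵥ x) ≤ (G.maxDegree : ℝ) := by
      calc x ⬝ᵥ ((Matrix.diagonal (fun v => (G.degree v : ℝ))) *ᵥ x)
          = ∑ i, (G.degree i : ℝ) * (x i * x i) := by
            simp only [dotProduct, Matrix.mulVec_diagonal]
            exact Finset.sum_congr rfl fun i _ => by ring
        _ ≤ ∑ i, (G.maxDegree : ℝ) * (x i * x i) := by
            refine Finset.sum_le_sum fun i _ => ?_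
            refine mul_le_mul_of_nonneg_right ?_ (mul_self_nonneg _)
            exact_mod_cast G.degree_le_maxDegree i
        _ = (G.maxDegree : ℝ) * (x ⬝ᵥ x) := by rw [dotProduct, Finset.mul_sum]
        _ = (G.maxDegree : ℝ) := by rw [hx1, mul_one]
    have hAdj : x ⬝ᵥ ((G.adjMatrix ℝ) *ᵥ x) ≤ lamAlpha G 0 := by
      have := rayleigh_le (hA0 ▸ hherm 0) x
      rw [hx1, mul_one] at this
      rw [lamAlpha, hA0]
      exact this
    rw [heq, hsplit]
    have h1α : (0:ℝ) ≤ 1 - α := by linarith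
    exact add_le_add (mul_le_mul_of_nonneg_left hD h0) (mul_le_mul_of_nonneg_left hAdj h1α)
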